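/- arXiv:1910.00225 — 4 statements merged into one kernel-verified Lean document; each statement's English description precedes it below -/
import Mathlib

section
/- Let A be a real m×n payoff matrix defining a finite two-player zero-sum strategic-form game and let M be any set of pure strategies of player 1 each of which is a mistake (assigned probability zero in every Nash equilibrium of A). Let A' be the matrix obtained from A by deleting all rows in M. Then for every Nash equilibrium (x*, y*) of A, the profile (x'*, y*), where x'* is x* restricted to the rows not in M, is a Nash equilibrium of A'. In particular, removing any subset of mistake strategies cannot reduce the set of equilibria. -/
open Matrix BigOperators

/-- A mixed strategy: nonnegative components summing to 1. -/
def IsMixed {I : Type*} [Fintype I] (x : I → ℝ) : Prop :=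
  (∀ i, 0 ≤ x i) ∧ ∑ i, x i = 1

/-- Player 1's expected payoff xᵀAy. -/
def payoff {I J : Type*} [Fintype I] [Fintype J]
    (A : Matrix I J ℝ) (x : I → ℝ) (y : J → ℝ) : ℝ :=
  ∑ i, ∑ j, x i * A i j * y j

/-- Nash equilibrium of the zero-sum game with player-1 payoff matrix `A`. -/
def IsNash {I J : Type*} [Fintype I] [Fintype J]
    (A : Matrix I J ℝ) (x : I → ℝ) (y : J → ℝ) : Prop :=
  IsMixed x ∧ IsMixed y ∧
  (∀ x', IsMixed x' → payoff A x' y ≤ payoff A x y) ∧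
  (∀ y', IsMixed y' → payoff A x y ≤ payoff A x y')

lemma sum_subtype_eq_full {m : ℕ} (M : Finset (Fin m)) (f : Fin m → ℝ)
    (hf : ∀ k ∈ M, f k = 0) :
    ∑ i : {i : Fin m // i ∉ M}, f i.1 = ∑ i, f i := by
  have h1 : ∑ i ∈ Mᶜ, f i = ∑ i : {i : Fin m // i ∉ M}, f i.1 :=
    Finset.sum_subtype Mᶜ (fun x => Finset.mem_compl) f
  rw [← h1]
  rw [← Finset.sum_compl_add_sum M f, Finset.sum_eq_zero hf, add_zero]

/-- Let `M` be any set of pure strategies of player 1 each of which is a mistake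
(assigned probability zero in every Nash equilibrium of `A`), and let `A'` be the matrix
obtained from `A` by deleting all rows in `M`.  Then for every Nash equilibrium `(x*, y*)`
of `A`, the profile `(x'*, y*)`, where `x'*` is `x*` restricted to the rows not in `M`,
is a Nash equilibrium of `A'`.  Hence removing any subset of mistake strategies cannot
reduce the set of equilibria. -/
theorem mistake_subset_removal_preserves_equilibrium {m n : ℕ}
    (A : Matrix (Fin m) (Fin n) ℝ) (M : Finset (Fin m))
    (hmistakes : ∀ k ∈ M, ∀ x y, IsNash A x y → x k = 0)
    (xstar : Fin m → ℝ) (ystar : Fin n → ℝ)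
    (heq : IsNash A xstar ystar) :
    IsNash (fun (i : {i : Fin m // i ∉ M}) (j : Fin n) => A i.1 j)
      (fun (i : {i : Fin m // i ∉ M}) => xstar i.1) ystar := by
  obtain ⟨⟨hxnn, hxs⟩, hy, hbr1, hbr2⟩ := heq
  have hzero : ∀ k ∈ M, xstar k = 0 := fun k hk =>
    hmistakes k hk xstar ystar ⟨⟨hxnn, hxs⟩, hy, hbr1, hbr2⟩
  -- payoff of restricted equals payoff of full
  have hpay : payoff (fun (i : {i : Fin m // i ∉ M}) (j : Fin n) => A i.1 j)
      (fun i => xstar i.1) ystar = payoff A xstar ystar := by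
    unfold payoff
    exact sum_subtype_eq_full M (fun i => ∑ j, xstar i * A i j * ystar j)
      (fun k hk => by simp [hzero k hk])
  refine ⟨⟨fun i => hxnn i.1, ?_⟩, hy, ?_, ?_⟩
  · rw [sum_subtype_eq_full M xstar hzero]; exact hxs
  · intro x' hx'
    set xe : Fin m → ℝ := fun i => if h : i ∈ M then 0 else x' ⟨i, h⟩ with hxe
    have hxe_mixed : IsMixed xe := by
      constructor
      · intro i
        by_cases h : i ∈ M <;> simp [hxe, h, hx'.1]
      · have : ∑ i : {i : Fin m // i ∉ M}, xe i.1 = ∑ i, xe i :=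
          sum_subtype_eq_full M xe (fun k hk => by simp [hxe, hk])
        rw [← this]
        have : ∀ i : {i : Fin m // i ∉ M}, xe i.1 = x' i := fun i => by
          simp [hxe, i.2]
        simp_rw [this]
        exact hx'.2
    have hpe : payoff (fun (i : {i : Fin m // i ∉ M}) (j : Fin n) => A i.1 j)
        x' ystar = payoff A xe ystar := by
      unfold payoff
      rw [← sum_subtype_eq_full M (fun i => ∑ j, xe i * A i j * ystar j)
        (fun k hk => by simp [hxe, hk])]
      refine Finset.sum_congr rfl fun i _ => Finset.sum_congr rfl fun j _ => by
        simp [hxe, i.2]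
    rw [hpe, hpay]
    exact hbr1 xe hxe_mixed
  · intro y' hy'
    have hpe : payoff (fun (i : {i : Fin m // i ∉ M}) (j : Fin n) => A i.1 j)
        (fun i => xstar i.1) y' = payoff A xstar y' := by
      unfold payoff
      exact sum_subtype_eq_full M (fun i => ∑ j, xstar i * A i j * y' j)
        (fun k hk => by simp [hzero k hk])
    rw [hpe, hpay]
    exact hbr2 y' hy'
end

section
/- Let A be a real m×n payoff matrix defining a finite two-player zero-sum strategic-form game, and suppose pure strategy k of player 1 is strictly dominated by some mixed strategy x' of player 1 (i.e., the payoff of x' against every pure strategy of player 2 strictly exceeds that of k). Then every Nash equilibrium (x*, y*) satisfies x*_k = 0; that is, every strictly dominated pure strategy is a mistake. -/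
open Matrix BigOperators

/-- If pure strategy `k` of player 1 is strictly dominated by some mixed strategy `x'`
(the payoff of `x'` against every pure strategy of player 2 strictly exceeds that of `k`),
then every Nash equilibrium `(x*, y*)` satisfies `x*_k = 0`: every strictly dominated
pure strategy is a mistake. -/
theorem strictly_dominated_is_mistake {m n : ℕ}
    (A : Matrix (Fin m) (Fin n) ℝ) (k : Fin m) (x' : Fin m → ℝ)
    (hx' : IsMixed x')
    (hdom : ∀ j, A k j < ∑ i, x' i * A i j) :
    ∀ xstar ystar, IsNash A xstar ystar → xstar k = 0 := by
  intro xstar ystar hN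
  obtain ⟨⟨hxnn, hxs⟩, ⟨hynn, hys⟩, h1, _⟩ := hN
  by_contra hk
  have hc : 0 < xstar k := lt_of_le_of_ne (hxnn k) (Ne.symm hk)
  set c := xstar k with hcdef
  -- the deviating strategy
  set x'' : Fin m → ℝ := fun i => xstar i + c * x' i - (if i = k then c else 0) with hx''
  have hmix : IsMixed x'' := by
    constructor
    · intro i
      by_cases h : i = k
      · subst h
        simp [hx'']
        nlinarith [hx'.1 i, hxnn i]
      · simp [hx'', h]
        nlinarith [hx'.1 i, hxnn i]
    · simp only [hx'', Finset.sum_sub_distrib, Finset.sum_add_distrib,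
        ← Finset.mul_sum, Finset.sum_ite_eq']
      simp [hxs, hx'.2]
  -- there is a column with positive weight
  have hyj : ∃ j, 0 < ystar j := by
    by_contra h
    push_neg at h
    have : ∀ j, ystar j = 0 := fun j => le_antisymm (h j) (hynn j)
    simp [this] at hys
  obtain ⟨j0, hj0⟩ := hyj
  -- key strict inequality between sums over columns
  have key : ∑ j, A k j * ystar j < ∑ j, (∑ i, x' i * A i j) * ystar j := by
    apply Finset.sum_lt_sum
    · intro j _
      exact mul_le_mul_of_nonneg_right (le_of_lt (hdom j)) (hynn j)
    · exact ⟨j0, Finset.mem_univ j0, mul_lt_mul_of_pos_right (hdom j0) hj0⟩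
  -- compute payoff of x''
  have hpay : payoff A x'' ystar
      = payoff A xstar ystar
        + c * ((∑ j, (∑ i, x' i * A i j) * ystar j) - ∑ j, A k j * ystar j) := by
    have e1 : ∀ i j, x'' i * A i j * ystar j
        = xstar i * A i j * ystar j + c * (x' i * A i j * ystar j)
          - (if i = k then c * (A i j * ystar j) else 0) := by
      intro i j
      simp only [hx'']
      split <;> ring
    have e2 : (∑ i, ∑ j, (if i = k then c * (A i j * ystar j) else 0))
        = c * ∑ j, A k j * ystar j := by
      rw [Finset.sum_comm]
      simp [Finset.sum_ite_eq', Finset.mul_sum]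
    have e3 : (∑ i, ∑ j, c * (x' i * A i j * ystar j))
        = c * ∑ j, (∑ i, x' i * A i j) * ystar j := by
      rw [Finset.sum_comm]
      simp only [← Finset.mul_sum, Finset.sum_mul]
    simp only [payoff, e1, Finset.sum_sub_distrib, Finset.sum_add_distrib, e2, e3]
    ring
  have hgt : payoff A xstar ystar < payoff A x'' ystar := by
    rw [hpay]
    nlinarith [key, hc]
  exact absurd (h1 x'' hmix) (not_le.mpr hgt)
end

section
/- Let A be a real m×n payoff matrix defining a finite two-player zero-sum strategic-form game, and suppose the pure strategy k of player 1 is weakly dominated by a mixed strategy x' of player 1. Then any mixed strategy x of player 1 with x_k > 0 is itself weakly dominated, namely by the mixed strategy obtained from x by transferring the probability mass x_k from pure strategy k to the distribution x'. -/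
open Matrix BigOperators

/-- The mixed strategy obtained from `x` by transferring the probability mass `x k`
from pure strategy `k` to the distribution `x'`. -/
def transfer {m : ℕ} (x x' : Fin m → ℝ) (k : Fin m) : Fin m → ℝ :=
  fun i => (if i = k then 0 else x i) + x k * x' i

lemma sum_ite_zero_eq {m : ℕ} (k : Fin m) (f : Fin m → ℝ) :
    ∑ i, (if i = k then (0:ℝ) else f i) = ∑ i, f i - f k := by
  have : ∀ i ∈ Finset.univ, (if i = k then (0:ℝ) else f i)
      = f i - (if i = k then f k else 0) := by
    intro i _; by_cases h : i = k <;> simp [h]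
  rw [Finset.sum_congr rfl this, Finset.sum_sub_distrib,
    Finset.sum_ite_eq' Finset.univ k (fun _ => f k)]
  simp

/-- If pure strategy `k` of player 1 is weakly dominated by a mixed strategy `x'`, then any
mixed strategy `x` of player 1 with `x k > 0` is itself weakly dominated, namely by the
mixed strategy obtained from `x` by transferring the probability mass `x k` from pure
strategy `k` to the distribution `x'`. -/
theorem mixed_with_weakly_dominated_support_is_weakly_dominated {m n : ℕ}
    (A : Matrix (Fin m) (Fin n) ℝ) (k : Fin m) (x' : Fin m → ℝ)
    (hx' : IsMixed x')
    (hdom : (∀ j, A k j ≤ ∑ i, x' i * A i j) ∧ (∃ j, A k j < ∑ i, x' i * A i j))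
    (x : Fin m → ℝ) (hx : IsMixed x) (hk : 0 < x k) :
    IsMixed (transfer x x' k) ∧
    (∀ j, ∑ i, x i * A i j ≤ ∑ i, transfer x x' k i * A i j) ∧
    (∃ j, ∑ i, x i * A i j < ∑ i, transfer x x' k i * A i j) := by
  have key : ∀ j, ∑ i, transfer x x' k i * A i j
      = ∑ i, x i * A i j + x k * (∑ i, x' i * A i j - A k j) := by
    intro j
    simp only [transfer, add_mul, Finset.sum_add_distrib]
    simp only [ite_mul, zero_mul]
    rw [sum_ite_zero_eq k (fun i => x i * A i j)]
    rw [show ∑ i, x k * x' i * A i j = x k * ∑ i, x' i * A i j by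
      rw [Finset.mul_sum]; apply Finset.sum_congr rfl; intro i _; ring]
    ring
  refine ⟨⟨?_, ?_⟩, ?_, ?_⟩
  · intro i
    have h1 := hx.1 i
    have h2 := mul_nonneg hk.le (hx'.1 i)
    unfold transfer
    rcases eq_or_ne i k with h | h
    · subst h; simpa using h2
    · simp [h]; linarith
  · have : ∑ i, transfer x x' k i
        = (∑ i, x i - x k) + x k * ∑ i, x' i := by
      simp only [transfer, Finset.sum_add_distrib, sum_ite_zero_eq k x, Finset.mul_sum]
    rw [this, hx.2, hx'.2]; ring
  · intro j
    rw [key j]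
    nlinarith [hdom.1 j]
  · obtain ⟨j, hj⟩ := hdom.2
    exact ⟨j, by rw [key j]; nlinarith⟩
end

section
/- Let A be a real m×n payoff matrix defining a finite two-player zero-sum strategic-form game, and suppose the pure strategy k of player 1 is weakly dominated by some mixed strategy of player 1. Then k is a strong mistake: in every Nash equilibrium (x*, y*) in which x* is not weakly dominated, x*_k = 0. -/
open Matrix BigOperators

/-- A mixed strategy `x` of player 1 is weakly dominated: some mixed strategy `x''` does at
least as well against every pure strategy of player 2, strictly better against one. -/
def WeaklyDominatedMixed {I J : Type*} [Fintype I] [Fintype J]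
    (A : Matrix I J ℝ) (x : I → ℝ) : Prop :=
  ∃ x'', IsMixed x'' ∧ (∀ j, ∑ i, x i * A i j ≤ ∑ i, x'' i * A i j) ∧
    (∃ j, ∑ i, x i * A i j < ∑ i, x'' i * A i j)

lemma sum_redistribute {m : ℕ} (k : Fin m) (xs x' : Fin m → ℝ) (f : Fin m → ℝ) :
    ∑ i, ((if i = k then 0 else xs i) + xs k * x' i) * f i
      = ∑ i, xs i * f i - xs k * f k + xs k * ∑ i, x' i * f i := by
  rw [show (∑ i, ((if i = k then 0 else xs i) + xs k * x' i) * f i)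
      = ∑ i, ((xs i * f i - (if i = k then xs k * f k else 0)) + xs k * (x' i * f i)) from
        Finset.sum_congr rfl (fun i _ => by by_cases h : i = k <;> simp [h] <;> ring)]
  simp [Finset.sum_add_distrib, Finset.sum_sub_distrib, Finset.mul_sum]

/-- If pure strategy `k` of player 1 is weakly dominated by some mixed strategy of player 1,
then `k` is a strong mistake: in every Nash equilibrium `(x*, y*)` in which `x*` is not
weakly dominated, `x*_k = 0`. -/
theorem weakly_dominated_is_strong_mistake {m n : ℕ}
    (A : Matrix (Fin m) (Fin n) ℝ) (k : Fin m)
    (hdom : ∃ x', IsMixed x' ∧ (∀ j, A k j ≤ ∑ i, x' i * A i j) ∧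
      (∃ j, A k j < ∑ i, x' i * A i j)) :
    ∀ xstar ystar, IsNash A xstar ystar → ¬ WeaklyDominatedMixed A xstar → xstar k = 0 := by
  intro xstar ystar hNash hnd
  obtain ⟨x', hx'mix, hle, j0, hlt⟩ := hdom
  by_contra hk
  have ht : 0 < xstar k := lt_of_le_of_ne (hNash.1.1 k) (Ne.symm hk)
  apply hnd
  refine ⟨fun i => (if i = k then 0 else xstar i) + xstar k * x' i, ⟨?_, ?_⟩, ?_, ?_⟩
  · intro i
    have h1 : (0:ℝ) ≤ (if i = k then 0 else xstar i) := by
      split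
      · exact le_refl 0
      · exact hNash.1.1 i
    have h2 : 0 ≤ xstar k * x' i := mul_nonneg ht.le (hx'mix.1 i)
    exact add_nonneg h1 h2
  · have h := sum_redistribute k xstar x' (fun _ => 1)
    simp only [mul_one] at h
    rw [h, hNash.1.2, hx'mix.2]
    ring
  · intro j
    have h := sum_redistribute k xstar x' (fun i => A i j)
    rw [h]
    have := hle j
    nlinarith [ht.le]
  · refine ⟨j0, ?_⟩
    have h := sum_redistribute k xstar x' (fun i => A i j0)
    rw [h]
    nlinarith [ht, hlt]
end
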